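/- arXiv:1401.0315 — 3 statements merged into one kernel-verified Lean document; each statement's English description precedes it below -/
import Mathlib

section
/- Let (E,M) be a V-prefactorization system on a V-category B, let B, B' : J → B be V-functors, and let m : B → B' be a V-natural transformation all of whose components m_j : Bj → B'j (j ∈ J) lie in M. Suppose W : J → V is a V-functor for which the V-enriched weighted limits [W,B] and [W,B'] exist in B. Then the induced morphism [W,m] : [W,B] → [W,B'] lies in M. -/
open CategoryTheory CategoryTheory.Limits CategoryTheory.MonoidalCategory

universe w v₁ v₂ v₃ v₄ u₁ u₂ u₃ u₄

namespace EnrichedFS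

variable (V : Type u₁) [Category.{v₁} V] [MonoidalCategory V] [SymmetricCategory V]
  [MonoidalClosed V]
variable (B : Type u₂) [Category.{v₂} B] [EnrichedOrdinaryCategory V B]

/-- `e` is `V`-orthogonal to `m`: the square of hom-objects
with top `B(A₂,m)`, left `B(e,X₁)`, right `B(e,X₂)`, bottom `B(A₁,m)`
is a pullback in `V`. -/
def VOrth {A₁ A₂ X₁ X₂ : B} (e : A₁ ⟶ A₂) (m : X₁ ⟶ X₂) : Prop :=
  IsPullback (eHomWhiskerLeft V A₂ m) (eHomWhiskerRight V e X₁)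
    (eHomWhiskerRight V e X₂) (eHomWhiskerLeft V A₁ m)

/-- `H^{↓V}`: the class of morphisms to which every member of `H` is `V`-orthogonal. -/
def vRlp (H : MorphismProperty B) : MorphismProperty B :=
  fun _ _ m => ∀ ⦃A₁ A₂ : B⦄ (e : A₁ ⟶ A₂), H e → VOrth V B e m

/-- `M^{↑V}`: the class of morphisms which are `V`-orthogonal to every member of `M`. -/
def vLlp (M : MorphismProperty B) : MorphismProperty B :=
  fun _ _ e => ∀ ⦃X₁ X₂ : B⦄ (m : X₁ ⟶ X₂), M m → VOrth V B e m

/-- ordinary orthogonality: unique diagonal fillers for every commutative square. -/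
def OrdOrth {A₁ A₂ X₁ X₂ : B} (e : A₁ ⟶ A₂) (m : X₁ ⟶ X₂) : Prop :=
  ∀ (u : A₁ ⟶ X₁) (v : A₂ ⟶ X₂), u ≫ m = e ≫ v →
    ∃! d : A₂ ⟶ X₁, e ≫ d = u ∧ d ≫ m = v

/-- `H^{↓}` (ordinary). -/
def ordRlp (H : MorphismProperty B) : MorphismProperty B :=
  fun _ _ m => ∀ ⦃A₁ A₂ : B⦄ (e : A₁ ⟶ A₂), H e → OrdOrth B e m

/-- `M^{↑}` (ordinary). -/
def ordLlp (M : MorphismProperty B) : MorphismProperty B :=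
  fun _ _ e => ∀ ⦃X₁ X₂ : B⦄ (m : X₁ ⟶ X₂), M m → OrdOrth B e m

/-- `(E,M)` is a `V`-prefactorization system: `E^{↓V} = M` and `M^{↑V} = E`. -/
def IsVPrefactorization (E M : MorphismProperty B) : Prop :=
  vRlp V B E = M ∧ vLlp V B M = E

/-- `(E,M)` is an ordinary prefactorization system. -/
def IsOrdPrefactorization (E M : MorphismProperty B) : Prop :=
  ordRlp B E = M ∧ ordLlp B M = E

/-- every morphism factors as a morphism in `E` followed by a morphism in `M`. -/
def FactorizationsExist (E M : MorphismProperty B) : Prop :=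
  ∀ ⦃X Y : B⦄ (f : X ⟶ Y), ∃ (Z : B) (e : X ⟶ Z) (m : Z ⟶ Y), E e ∧ M m ∧ e ≫ m = f

/-- `(E,M)` is a `V`-factorization system. -/
def IsVFactorizationSystem (E M : MorphismProperty B) : Prop :=
  IsVPrefactorization V B E M ∧ FactorizationsExist B E M

/-- `(E,M)` is an ordinary factorization system. -/
def IsOrdFactorizationSystem (E M : MorphismProperty B) : Prop :=
  IsOrdPrefactorization B E M ∧ FactorizationsExist B E M

/-- intersection of two classes of morphisms. -/
def interProp (M N : MorphismProperty B) : MorphismProperty B := fun _ _ f => M f ∧ N f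

/-- `V`-monomorphisms. -/
def vMono : MorphismProperty B := fun _ _ m => ∀ A : B, Mono (eHomWhiskerLeft V A m)

/-- `V`-epimorphisms. -/
def vEpi : MorphismProperty B := fun _ _ e => ∀ A : B, Mono (eHomWhiskerRight V e A)

/-- `V`-strong monomorphisms. -/
def vStrongMono : MorphismProperty B := fun _ _ m =>
  vMono V B m ∧ ∀ ⦃A₁ A₂ : B⦄ (e : A₁ ⟶ A₂), vEpi V B e → VOrth V B e m

/-- `V`-strong epimorphisms. -/
def vStrongEpi : MorphismProperty B := fun _ _ e =>
  vEpi V B e ∧ ∀ ⦃X₁ X₂ : B⦄ (m : X₁ ⟶ X₂), vMono V B m → VOrth V B e m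

/-- ordinary monomorphisms, as a class. -/
def ordMono : MorphismProperty B := fun _ _ m => Mono m

/-- ordinary epimorphisms, as a class. -/
def ordEpi : MorphismProperty B := fun _ _ e => Epi e

/-- ordinary strong monomorphisms. -/
def ordStrongMono : MorphismProperty B := fun _ _ m =>
  Mono m ∧ ∀ ⦃A₁ A₂ : B⦄ (e : A₁ ⟶ A₂), Epi e → OrdOrth B e m

/-- ordinary strong epimorphisms. -/
def ordStrongEpi : MorphismProperty B := fun _ _ e =>
  Epi e ∧ ∀ ⦃X₁ X₂ : B⦄ (m : X₁ ⟶ X₂), Mono m → OrdOrth B e m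

/-- closure under composition with isomorphisms on either side. -/
def ClosedUnderIsoComp (E : MorphismProperty B) : Prop :=
  (∀ ⦃X Y Z : B⦄ (e : X ⟶ Y) (i : Y ⟶ Z), E e → IsIso i → E (e ≫ i)) ∧
  (∀ ⦃X Y Z : B⦄ (i : X ⟶ Y) (e : Y ⟶ Z), IsIso i → E e → E (i ≫ e))

/-- a commutative square which is a `V`-pullback: it is sent to a pullback square
in `V` by every hom functor `B(A,-)`. -/
def IsVPullbackSq {P X Y Z : B} (p₁ : P ⟶ X) (p₂ : P ⟶ Y) (f : X ⟶ Z) (g : Y ⟶ Z) : Prop :=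
  p₁ ≫ f = p₂ ≫ g ∧
    ∀ A : B, IsPullback (eHomWhiskerLeft V A p₁) (eHomWhiskerLeft V A p₂)
      (eHomWhiskerLeft V A f) (eHomWhiskerLeft V A g)

/-- a commutative square which is a `V`-pushout: it is sent to a pullback square
in `V` by every hom functor `B(-,A)`. -/
def IsVPushoutSq {X Y₁ Y₂ Q : B} (f₁ : X ⟶ Y₁) (f₂ : X ⟶ Y₂) (i₁ : Y₁ ⟶ Q) (i₂ : Y₂ ⟶ Q) :
    Prop :=
  f₁ ≫ i₁ = f₂ ≫ i₂ ∧
    ∀ A : B, IsPullback (eHomWhiskerRight V i₁ A) (eHomWhiskerRight V i₂ A)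
      (eHomWhiskerRight V f₁ A) (eHomWhiskerRight V f₂ A)

/-- `B` has `V`-kernel pairs. -/
def HasVKernelPairs : Prop :=
  ∀ ⦃X Y : B⦄ (f : X ⟶ Y), ∃ (P : B) (p₁ p₂ : P ⟶ X), IsVPullbackSq V B p₁ p₂ f f

/-- `B` has `V`-cokernel pairs. -/
def HasVCokernelPairs : Prop :=
  ∀ ⦃X Y : B⦄ (f : X ⟶ Y), ∃ (Q : B) (i₁ i₂ : Y ⟶ Q), IsVPushoutSq V B f f i₁ i₂

/-- `m : P ⟶ C` is a `V`-fibre-product (`V`-wide-pullback) of the family `f i : X i ⟶ C`,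
with projections `π i`. -/
def IsVFibreProduct {ι : Type w} {C : B} {X : ι → B} (f : ∀ i, X i ⟶ C)
    {P : B} (m : P ⟶ C) (π : ∀ i, P ⟶ X i) : Prop :=
  (∀ i, π i ≫ f i = m) ∧
    ∀ (A : B) (Z : V) (z : Z ⟶ (A ⟶[V] C)) (zi : ∀ i, Z ⟶ (A ⟶[V] X i)),
      (∀ i, zi i ≫ eHomWhiskerLeft V A (f i) = z) →
        ∃! t : Z ⟶ (A ⟶[V] P), t ≫ eHomWhiskerLeft V A m = z ∧
          ∀ i, t ≫ eHomWhiskerLeft V A (π i) = zi i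

/-- `m : P ⟶ C` is an ordinary fibre product (wide pullback) of the family `f i : X i ⟶ C`. -/
def OrdIsFibreProduct {ι : Type w} {C : B} {X : ι → B} (f : ∀ i, X i ⟶ C)
    {P : B} (m : P ⟶ C) (π : ∀ i, P ⟶ X i) : Prop :=
  (∀ i, π i ≫ f i = m) ∧
    ∀ ⦃W' : B⦄ (z : W' ⟶ C) (zi : ∀ i, W' ⟶ X i), (∀ i, zi i ≫ f i = z) →
      ∃! t : W' ⟶ P, t ≫ m = z ∧ ∀ i, t ≫ π i = zi i

/-- a cone is a `V`-limit cone: it is sent to a limit cone in `V` by every `B(A,-)`. -/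
def IsVLimitCone {J : Type u₃} [Category.{v₃} J] {D : J ⥤ B} (c : Cone D) : Prop :=
  ∀ (A : B) (Z : V) (z : ∀ j : J, Z ⟶ (A ⟶[V] D.obj j)),
    (∀ ⦃j j' : J⦄ (φ : j ⟶ j'), z j ≫ eHomWhiskerLeft V A (D.map φ) = z j') →
      ∃! t : Z ⟶ (A ⟶[V] c.pt), ∀ j, t ≫ eHomWhiskerLeft V A (c.π.app j) = z j

/-- a cocone is a `V`-colimit cocone: it is sent to a limit cone in `V` by every `B(-,A)`. -/
def IsVColimitCocone {J : Type u₃} [Category.{v₃} J] {D : J ⥤ B} (c : Cocone D) : Prop :=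
  ∀ (A : B) (Z : V) (z : ∀ j : J, Z ⟶ (D.obj j ⟶[V] A)),
    (∀ ⦃j j' : J⦄ (φ : j ⟶ j'), z j' ≫ eHomWhiskerRight V (D.map φ) A = z j) →
      ∃! t : Z ⟶ (c.pt ⟶[V] A), ∀ j, t ≫ eHomWhiskerRight V (c.ι.app j) A = z j

/-- `B` has small `V`-limits. -/
def HasSmallVLimits : Prop :=
  ∀ (J : Type v₂) [SmallCategory J] (D : J ⥤ B), ∃ c : Cone D, IsVLimitCone V B c

/-- `B` has small `V`-colimits. -/
def HasSmallVColimits : Prop :=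
  ∀ (J : Type v₂) [SmallCategory J] (D : J ⥤ B), ∃ c : Cocone D, IsVColimitCocone V B c

/-- `B` has finite `V`-limits. -/
def HasFiniteVLimits : Prop :=
  ∀ (J : Type) [SmallCategory J] [FinCategory J] (D : J ⥤ B),
    ∃ c : Cone D, IsVLimitCone V B c

/-- `B` is well-powered with respect to the class `M`: every object has,
up to isomorphism, only a set of `M`-subobjects. -/
def WellPoweredWrt (M : MorphismProperty B) : Prop :=
  ∀ X : B, ∃ (ι : Type v₂) (Y : ι → B) (f : ∀ i, Y i ⟶ X), (∀ i, M (f i)) ∧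
    ∀ ⦃Z : B⦄ (g : Z ⟶ X), M g → ∃ (i : ι) (h : Z ≅ Y i), h.hom ≫ f i = g

/-- `B` is co-well-powered with respect to the class `E`. -/
def CoWellPoweredWrt (E : MorphismProperty B) : Prop :=
  ∀ X : B, ∃ (ι : Type v₂) (Y : ι → B) (f : ∀ i, X ⟶ Y i), (∀ i, E (f i)) ∧
    ∀ ⦃Z : B⦄ (g : X ⟶ Z), E g → ∃ (i : ι) (h : Y i ≅ Z), f i ≫ h.hom = g

/-- comparison morphism `B(T, X) ⟶ [v, B(A, X)]` in `V` induced by a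
unit `η : v ⟶ B(A, T)`, where `T` is a candidate tensor `v ⊗ A`. -/
def tensorComparison {v : V} {A T : B} (η : v ⟶ (A ⟶[V] T)) (X : B) :
    (T ⟶[V] X) ⟶ (ihom v).obj (A ⟶[V] X) :=
  MonoidalClosed.curry (eComp V A T X) ≫ (MonoidalClosed.pre η).app (A ⟶[V] X)

/-- `η : v ⟶ B(A,T)` exhibits `T` as a tensor `v ⊗ A` in the enriched sense. -/
def IsTensorUnit (v : V) (A T : B) (η : v ⟶ (A ⟶[V] T)) : Prop :=
  ∀ X : B, IsIso (tensorComparison V B η X)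

/-- `B` is tensored over `V`. -/
def Tensored : Prop :=
  ∀ (v : V) (A : B), ∃ (T : B) (η : v ⟶ (A ⟶[V] T)), IsTensorUnit V B v A T η

/-- `E` is closed under tensors: whenever tensors exist, `v ⊗ e` lies in `E` for `e ∈ E`. -/
def ClosedUnderTensors (E : MorphismProperty B) : Prop :=
  ∀ (v : V) ⦃A₁ A₂ : B⦄ (e : A₁ ⟶ A₂) {T₁ T₂ : B}
    (η₁ : v ⟶ (A₁ ⟶[V] T₁)) (η₂ : v ⟶ (A₂ ⟶[V] T₂)),
    IsTensorUnit V B v A₁ T₁ η₁ → IsTensorUnit V B v A₂ T₂ η₂ → E e →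
      ∀ t : T₁ ⟶ T₂, η₁ ≫ eHomWhiskerLeft V A₁ t = η₂ ≫ eHomWhiskerRight V e T₂ → E t

/-- comparison morphism `B(A, C) ⟶ [v, B(A, X)]` in `V` induced by a
counit `ε : v ⟶ B(C, X)`, where `C` is a candidate cotensor `[v, X]`. -/
def cotensorComparison {v : V} {C X : B} (ε : v ⟶ (C ⟶[V] X)) (A : B) :
    (A ⟶[V] C) ⟶ (ihom v).obj (A ⟶[V] X) :=
  MonoidalClosed.curry ((β_ (C ⟶[V] X) (A ⟶[V] C)).hom ≫ eComp V A C X) ≫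
    (MonoidalClosed.pre ε).app (A ⟶[V] X)

/-- `ε : v ⟶ B(C,X)` exhibits `C` as a cotensor `[v, X]` in the enriched sense. -/
def IsCotensorCounit (v : V) (X C : B) (ε : v ⟶ (C ⟶[V] X)) : Prop :=
  ∀ A : B, IsIso (cotensorComparison V B ε A)

/-- `B` is cotensored over `V`. -/
def Cotensored : Prop :=
  ∀ (v : V) (X : B), ∃ (C : B) (ε : v ⟶ (C ⟶[V] X)), IsCotensorCounit V B v X C ε

/-- `M` is closed under cotensors: `[v, m]` lies in `M` for `m ∈ M`. -/
def ClosedUnderCotensors (M : MorphismProperty B) : Prop :=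
  ∀ (v : V) ⦃X₁ X₂ : B⦄ (m : X₁ ⟶ X₂) {C₁ C₂ : B}
    (ε₁ : v ⟶ (C₁ ⟶[V] X₁)) (ε₂ : v ⟶ (C₂ ⟶[V] X₂)),
    IsCotensorCounit V B v X₁ C₁ ε₁ → IsCotensorCounit V B v X₂ C₂ ε₂ → M m →
      ∀ t : C₁ ⟶ C₂, ε₁ ≫ eHomWhiskerLeft V C₁ m = ε₂ ≫ eHomWhiskerRight V t X₂ → M t

/-- a `V`-functor from a `V`-category `J` to an enriched ordinary category `D`. -/
structure VFunctor (J : Type u₃) [EnrichedCategory V J]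
    (D : Type u₄) [Category.{v₄} D] [EnrichedOrdinaryCategory V D] where
  obj : J → D
  emap : ∀ X Y : J, (X ⟶[V] Y) ⟶ (obj X ⟶[V] obj Y)
  emap_id : ∀ X : J, eId V X ≫ emap X X = eId V (obj X)
  emap_comp : ∀ X Y Z : J,
    eComp V X Y Z ≫ emap X Z = (emap X Y ⊗ₘ emap Y Z) ≫ eComp V (obj X) (obj Y) (obj Z)

/-- the underlying action of a `V`-functor on ordinary morphisms. -/
def VFunctor.map' {J : Type u₃} [Category.{v₃} J] [EnrichedOrdinaryCategory V J]
    {D : Type u₄} [Category.{v₄} D] [EnrichedOrdinaryCategory V D]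
    (F : VFunctor V J D) {X Y : J} (f : X ⟶ Y) : F.obj X ⟶ F.obj Y :=
  (eHomEquiv V).symm (eHomEquiv V f ≫ F.emap X Y)

/-- a `V`-adjunction `F ⊣ G`, given by a `V`-natural isomorphism
`D(F A, X) ≅ A(A, G X)` of hom-objects. -/
structure VAdjunction {A : Type u₃} [Category.{v₃} A] [EnrichedOrdinaryCategory V A]
    {D : Type u₄} [Category.{v₄} D] [EnrichedOrdinaryCategory V D]
    (F : VFunctor V A D) (G : VFunctor V D A) where
  iso : ∀ (X : A) (Y : D), (F.obj X ⟶[V] Y) ≅ (X ⟶[V] G.obj Y)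
  nat_right : ∀ (X : A) (Y Y' : D),
    eComp V (F.obj X) Y Y' ≫ (iso X Y').hom =
      ((iso X Y).hom ⊗ₘ G.emap Y Y') ≫ eComp V X (G.obj Y) (G.obj Y')
  nat_left : ∀ (X X' : A) (Y : D),
    (F.emap X X' ▷ (F.obj X' ⟶[V] Y)) ≫ eComp V (F.obj X) (F.obj X') Y ≫ (iso X Y).hom =
      ((X ⟶[V] X') ◁ (iso X' Y).hom) ≫ eComp V X X' (G.obj Y)

/-- a `V`-functor `J → V` (a weight), presented by its uncurried action. -/
structure VWeight (J : Type u₃) [EnrichedCategory V J] where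
  obj : J → V
  act : ∀ j j' : J, obj j ⊗ (j ⟶[V] j') ⟶ obj j'
  act_id : ∀ j : J, (obj j ◁ eId V j) ≫ act j j = (ρ_ (obj j)).hom
  act_comp : ∀ j j' j'' : J,
    (α_ (obj j) (j ⟶[V] j') (j' ⟶[V] j'')).inv ≫ (act j j' ▷ (j' ⟶[V] j'')) ≫ act j' j'' =
      (obj j ◁ eComp V j j' j'') ≫ act j j''

/-- a `V`-natural transformation between `V`-functors. -/
structure VNatTrans {J : Type u₃} [EnrichedCategory V J]
    {D : Type u₄} [Category.{v₄} D] [EnrichedOrdinaryCategory V D]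
    (F G : VFunctor V J D) where
  app : ∀ j : J, F.obj j ⟶ G.obj j
  naturality : ∀ j j' : J,
    F.emap j j' ≫ eHomWhiskerLeft V (F.obj j) (app j') =
      G.emap j j' ≫ eHomWhiskerRight V (app j) (G.obj j')

/-- `cone` exhibits `L` as the `V`-enriched weighted (indexed) limit `[W, F]`. -/
structure IsWeightedLimit {J : Type u₃} [EnrichedCategory V J]
    {D : Type u₄} [Category.{v₄} D] [EnrichedOrdinaryCategory V D]
    (W : VWeight V J) (F : VFunctor V J D) (L : D)
    (cone : ∀ j : J, W.obj j ⟶ (L ⟶[V] F.obj j)) : Prop where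
  natural : ∀ j j' : J,
    W.act j j' ≫ cone j' =
      (cone j ▷ (j ⟶[V] j')) ≫ ((L ⟶[V] F.obj j) ◁ F.emap j j') ≫
        eComp V L (F.obj j) (F.obj j')
  universal : ∀ (A : D) (Z : V) (μ : ∀ j : J, Z ⊗ W.obj j ⟶ (A ⟶[V] F.obj j)),
    (∀ j j' : J,
      (Z ◁ W.act j j') ≫ μ j' =
        (α_ Z (W.obj j) (j ⟶[V] j')).inv ≫ (μ j ▷ (j ⟶[V] j')) ≫
          ((A ⟶[V] F.obj j) ◁ F.emap j j') ≫ eComp V A (F.obj j) (F.obj j')) →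
      ∃! t : Z ⟶ (A ⟶[V] L), ∀ j : J,
        (t ▷ W.obj j) ≫ ((A ⟶[V] L) ◁ cone j) ≫ eComp V A L (F.obj j) = μ j

/-- `B` is `V`-finitely-well-complete: it has finite `V`-limits and `V`-intersections
of arbitrary class-indexed families of `V`-strong monomorphisms. -/
def VFinitelyWellComplete : Prop :=
  HasFiniteVLimits V B ∧
    ∀ {ι : Type (max u₂ v₂)} {C : B} (X : ι → B) (f : ∀ i, X i ⟶ C),
      (∀ i, vStrongMono V B (f i)) →
        ∃ (P : B) (m : P ⟶ C) (π : ∀ i, P ⟶ X i), IsVFibreProduct V B f m π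

/-- `B` is finitely well-complete (ordinary sense): it has finite limits and
intersections of arbitrary class-indexed families of strong monomorphisms. -/
def OrdFinitelyWellComplete : Prop :=
  HasFiniteLimits B ∧
    ∀ {ι : Type (max u₂ v₂)} {C : B} (X : ι → B) (f : ∀ i, X i ⟶ C),
      (∀ i, ordStrongMono B (f i)) →
        ∃ (P : B) (m : P ⟶ C) (π : ∀ i, P ⟶ X i), OrdIsFibreProduct B f m π


section AuxOrth

lemma eComp_whiskerLeft (A X : B) {Y Y' : B} (g : Y ⟶ Y') :
    eComp V A X Y ≫ eHomWhiskerLeft V A g =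
      ((A ⟶[V] X) ◁ eHomWhiskerLeft V X g) ≫ eComp V A X Y' := by
  dsimp [eHomWhiskerLeft]
  rw [rightUnitor_inv_naturality_assoc, ← whisker_exchange_assoc, ← e_assoc',
    associator_naturality_right_assoc, ← whiskerLeft_rightUnitor_inv_assoc]
  simp [MonoidalCategory.whiskerLeft_comp]

lemma eComp_whiskerRight {A₁ A₂ : B} (e : A₁ ⟶ A₂) (X Y : B) :
    eComp V A₂ X Y ≫ eHomWhiskerRight V e Y =
      (eHomWhiskerRight V e X ▷ (X ⟶[V] Y)) ≫ eComp V A₁ X Y := by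
  dsimp [eHomWhiskerRight]
  rw [leftUnitor_inv_naturality_assoc, whisker_exchange_assoc, ← e_assoc,
    associator_inv_naturality_left_assoc, leftUnitor_tensor_inv]
  simp [comp_whiskerRight]

lemma whiskerLeft_eComp (A : B) {X X' : B} (u : X ⟶ X') (Y : B) :
    (eHomWhiskerLeft V A u ▷ (X' ⟶[V] Y)) ≫ eComp V A X' Y =
      ((A ⟶[V] X) ◁ eHomWhiskerRight V u Y) ≫ eComp V A X Y := by
  dsimp [eHomWhiskerLeft, eHomWhiskerRight]
  rw [comp_whiskerRight, comp_whiskerRight, Category.assoc, Category.assoc, ← e_assoc',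
    associator_naturality_middle_assoc]
  simp [MonoidalCategory.whiskerLeft_comp]

lemma pairL {Z Wv : V} {A X Y Y' : B} (x : Z ⟶ (A ⟶[V] X)) (y : Wv ⟶ (X ⟶[V] Y)) (g : Y ⟶ Y') :
    ((x ▷ Wv) ≫ ((A ⟶[V] X) ◁ y) ≫ eComp V A X Y) ≫ eHomWhiskerLeft V A g =
      (x ▷ Wv) ≫ ((A ⟶[V] X) ◁ (y ≫ eHomWhiskerLeft V X g)) ≫ eComp V A X Y' := by
  simp only [Category.assoc]
  rw [eComp_whiskerLeft]
  simp [MonoidalCategory.whiskerLeft_comp]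

lemma pairR {Z Wv : V} {A₁ A₂ X Y : B} (e : A₁ ⟶ A₂) (x : Z ⟶ (A₂ ⟶[V] X))
    (y : Wv ⟶ (X ⟶[V] Y)) :
    ((x ▷ Wv) ≫ ((A₂ ⟶[V] X) ◁ y) ≫ eComp V A₂ X Y) ≫ eHomWhiskerRight V e Y =
      ((x ≫ eHomWhiskerRight V e X) ▷ Wv) ≫ ((A₁ ⟶[V] X) ◁ y) ≫ eComp V A₁ X Y := by
  simp only [Category.assoc]
  rw [eComp_whiskerRight, whisker_exchange_assoc, ← comp_whiskerRight_assoc]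

lemma pairM {Z Wv : V} {A X X' Y : B} (u : X ⟶ X') (x : Z ⟶ (A ⟶[V] X))
    (y : Wv ⟶ (X' ⟶[V] Y)) :
    ((x ≫ eHomWhiskerLeft V A u) ▷ Wv) ≫ ((A ⟶[V] X') ◁ y) ≫ eComp V A X' Y =
      (x ▷ Wv) ≫ ((A ⟶[V] X) ◁ (y ≫ eHomWhiskerRight V u Y)) ≫ eComp V A X Y := by
  rw [comp_whiskerRight, Category.assoc, ← whisker_exchange_assoc, whiskerLeft_eComp]
  simp [MonoidalCategory.whiskerLeft_comp]

lemma pairing_natural {J : Type u₃} [EnrichedCategory V J] (W : VWeight V J)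
    (F : VFunctor V J B) {L : B} (cone : ∀ j : J, W.obj j ⟶ (L ⟶[V] F.obj j))
    (hnat : ∀ j j' : J, W.act j j' ≫ cone j' =
      (cone j ▷ (j ⟶[V] j')) ≫ ((L ⟶[V] F.obj j) ◁ F.emap j j') ≫
        eComp V L (F.obj j) (F.obj j'))
    (A : B) (Z : V) (x : Z ⟶ (A ⟶[V] L)) (j j' : J) :
    (Z ◁ W.act j j') ≫ (x ▷ W.obj j') ≫ ((A ⟶[V] L) ◁ cone j') ≫ eComp V A L (F.obj j') =
      (α_ Z (W.obj j) (j ⟶[V] j')).inv ≫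
        (((x ▷ W.obj j) ≫ ((A ⟶[V] L) ◁ cone j) ≫ eComp V A L (F.obj j)) ▷ (j ⟶[V] j')) ≫
        ((A ⟶[V] F.obj j) ◁ F.emap j j') ≫ eComp V A (F.obj j) (F.obj j') := by
  rw [whisker_exchange_assoc, ← MonoidalCategory.whiskerLeft_comp_assoc, hnat j j']
  simp only [MonoidalCategory.whiskerLeft_comp, Category.assoc]
  rw [← e_assoc, associator_inv_naturality_right_assoc,
    associator_inv_naturality_middle_assoc, associator_inv_naturality_left_assoc,
    whisker_exchange_assoc]
  simp [comp_whiskerRight]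

end AuxOrth

/-- A morphism induced between `V`-enriched weighted limits by a `V`-natural
transformation whose components lie in `M` again lies in `M`. -/
theorem stmt1 (E M : MorphismProperty B) (h : IsVPrefactorization V B E M)
    {J : Type u₃} [EnrichedCategory V J] (W : VWeight V J) (F F' : VFunctor V J B)
    (m : VNatTrans V F F') (hm : ∀ j : J, M (m.app j))
    {L L' : B} (cone : ∀ j : J, W.obj j ⟶ (L ⟶[V] F.obj j))
    (cone' : ∀ j : J, W.obj j ⟶ (L' ⟶[V] F'.obj j))
    (hL : IsWeightedLimit V W F L cone) (hL' : IsWeightedLimit V W F' L' cone')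
    (t : L ⟶ L')
    (ht : ∀ j : J, cone j ≫ eHomWhiskerLeft V L (m.app j) =
      cone' j ≫ eHomWhiskerRight V t (F'.obj j)) :
    M t := by
  obtain ⟨hE, hM⟩ := h
  rw [← hE]
  intro A₁ A₂ e he
  rw [← hM] at he
  have orth : ∀ j : J, IsPullback (eHomWhiskerLeft V A₂ (m.app j))
      (eHomWhiskerRight V e (F.obj j)) (eHomWhiskerRight V e (F'.obj j))
      (eHomWhiskerLeft V A₁ (m.app j)) := fun j => he (m.app j) (hm j)
  have key : ∀ s : PullbackCone (eHomWhiskerRight V e L') (eHomWhiskerLeft V A₁ t),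
      ∃! u : s.pt ⟶ (A₂ ⟶[V] L),
        u ≫ eHomWhiskerLeft V A₂ t = s.fst ∧ u ≫ eHomWhiskerRight V e L = s.snd := by
    intro s
    have compat : ∀ j : J,
        ((s.fst ▷ W.obj j) ≫ ((A₂ ⟶[V] L') ◁ cone' j) ≫ eComp V A₂ L' (F'.obj j)) ≫
          eHomWhiskerRight V e (F'.obj j) =
        ((s.snd ▷ W.obj j) ≫ ((A₁ ⟶[V] L) ◁ cone j) ≫ eComp V A₁ L (F.obj j)) ≫
          eHomWhiskerLeft V A₁ (m.app j) := by
      intro j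
      rw [pairR, s.condition, pairM, ← ht j, pairL]
    have hμex : ∀ j : J, ∃ μj : s.pt ⊗ W.obj j ⟶ (A₂ ⟶[V] F.obj j),
        μj ≫ eHomWhiskerLeft V A₂ (m.app j) =
          (s.fst ▷ W.obj j) ≫ ((A₂ ⟶[V] L') ◁ cone' j) ≫ eComp V A₂ L' (F'.obj j) ∧
        μj ≫ eHomWhiskerRight V e (F.obj j) =
          (s.snd ▷ W.obj j) ≫ ((A₁ ⟶[V] L) ◁ cone j) ≫ eComp V A₁ L (F.obj j) :=
      fun j => ⟨(orth j).lift _ _ (compat j), (orth j).lift_fst _ _ (compat j),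
        (orth j).lift_snd _ _ (compat j)⟩
    choose μ hμ₁ hμ₂ using hμex
    have natμ : ∀ j j' : J, (s.pt ◁ W.act j j') ≫ μ j' =
        (α_ s.pt (W.obj j) (j ⟶[V] j')).inv ≫ (μ j ▷ (j ⟶[V] j')) ≫
          ((A₂ ⟶[V] F.obj j) ◁ F.emap j j') ≫ eComp V A₂ (F.obj j) (F.obj j') := by
      intro j j'
      apply (orth j').hom_ext
      · rw [Category.assoc, hμ₁ j',
          pairing_natural V B W F' cone' hL'.natural A₂ s.pt s.fst j j']
        simp only [Category.assoc]
        rw [eComp_whiskerLeft, ← MonoidalCategory.whiskerLeft_comp_assoc, m.naturality j j',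
          MonoidalCategory.whiskerLeft_comp_assoc, ← whiskerLeft_eComp,
          whisker_exchange_assoc, ← comp_whiskerRight_assoc, hμ₁ j]
      · rw [Category.assoc, hμ₂ j',
          pairing_natural V B W F cone hL.natural A₁ s.pt s.snd j j']
        simp only [Category.assoc]
        rw [eComp_whiskerRight, whisker_exchange_assoc, ← comp_whiskerRight_assoc, hμ₂ j]
    obtain ⟨u, hu, huniq⟩ := hL.universal A₂ s.pt μ natμ
    have hfst : u ≫ eHomWhiskerLeft V A₂ t = s.fst := by
      obtain ⟨u', _, huniq'⟩ := hL'.universal A₂ s.pt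
        (fun j => (s.fst ▷ W.obj j) ≫ ((A₂ ⟶[V] L') ◁ cone' j) ≫ eComp V A₂ L' (F'.obj j))
        (fun j j' => pairing_natural V B W F' cone' hL'.natural A₂ s.pt s.fst j j')
      have h1 : ∀ j : J, ((u ≫ eHomWhiskerLeft V A₂ t) ▷ W.obj j) ≫
          ((A₂ ⟶[V] L') ◁ cone' j) ≫ eComp V A₂ L' (F'.obj j) =
          (s.fst ▷ W.obj j) ≫ ((A₂ ⟶[V] L') ◁ cone' j) ≫ eComp V A₂ L' (F'.obj j) := by
        intro j
        rw [pairM, ← ht j, ← pairL, hu j, hμ₁ j]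
      exact (huniq' _ h1).trans (huniq' s.fst (fun j => rfl)).symm
    have hsnd : u ≫ eHomWhiskerRight V e L = s.snd := by
      obtain ⟨u'', _, huniq''⟩ := hL.universal A₁ s.pt
        (fun j => (s.snd ▷ W.obj j) ≫ ((A₁ ⟶[V] L) ◁ cone j) ≫ eComp V A₁ L (F.obj j))
        (fun j j' => pairing_natural V B W F cone hL.natural A₁ s.pt s.snd j j')
      have h1 : ∀ j : J, ((u ≫ eHomWhiskerRight V e L) ▷ W.obj j) ≫
          ((A₁ ⟶[V] L) ◁ cone j) ≫ eComp V A₁ L (F.obj j) =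
          (s.snd ▷ W.obj j) ≫ ((A₁ ⟶[V] L) ◁ cone j) ≫ eComp V A₁ L (F.obj j) := by
        intro j
        rw [← pairR, hu j, hμ₂ j]
      exact (huniq'' _ h1).trans (huniq'' s.snd (fun j => rfl)).symm
    refine ⟨u, ⟨hfst, hsnd⟩, ?_⟩
    rintro w ⟨hw1, hw2⟩
    refine huniq w (fun j => ?_)
    apply (orth j).hom_ext
    · rw [pairL, ht j, ← pairM, hw1, hμ₁ j]
    · rw [pairR, hw2, hμ₂ j]
  exact IsPullback.of_isLimit' ⟨eHom_whisker_exchange V e t⟩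
    (PullbackCone.IsLimit.mk _ (fun s => ((key s).exists).choose)
      (fun s => ((key s).exists).choose_spec.1)
      (fun s => ((key s).exists).choose_spec.2)
      (fun s w h1 h2 => (key s).unique ⟨h1, h2⟩ ((key s).exists).choose_spec))

end EnrichedFS
end

section
/- An ordinary prefactorization system (E,M) on a V-category B is a V-prefactorization system on B as soon as each e ∈ E is V-orthogonal to each m ∈ M. -/
open CategoryTheory CategoryTheory.Limits CategoryTheory.MonoidalCategory

universe w v₁ v₂ v₃ v₄ u₁ u₂ u₃ u₄

namespace EnrichedFS

variable (V : Type u₁) [Category.{v₁} V] [MonoidalCategory V] [SymmetricCategory V]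
  [MonoidalClosed V]
variable (B : Type u₂) [Category.{v₂} B] [EnrichedOrdinaryCategory V B]

lemma eHomEquiv_comp_left' {X Y Z : B} (f : X ⟶ Y) (g : Y ⟶ Z) :
    eHomEquiv V (f ≫ g) = eHomEquiv V f ≫ eHomWhiskerLeft V X g := by
  simp only [eHomEquiv_comp, eHomWhiskerLeft, tensorHom_def',
    rightUnitor_inv_naturality_assoc, leftUnitor_inv_naturality_assoc,
    whisker_exchange_assoc, unitors_inv_equal, Category.assoc]

lemma eHomEquiv_comp_right' {X Y Z : B} (f : X ⟶ Y) (g : Y ⟶ Z) :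
    eHomEquiv V (f ≫ g) = eHomEquiv V g ≫ eHomWhiskerRight V f Z := by
  simp only [eHomEquiv_comp, eHomWhiskerRight, MonoidalCategory.tensorHom_def,
    rightUnitor_inv_naturality_assoc, leftUnitor_inv_naturality_assoc,
    ← whisker_exchange_assoc, unitors_inv_equal, Category.assoc]

lemma vOrth_to_ordOrth {A₁ A₂ X₁ X₂ : B} {e : A₁ ⟶ A₂} {m : X₁ ⟶ X₂}
    (hv : VOrth V B e m) : OrdOrth B e m := by
  intro u v huv
  have w : eHomEquiv V v ≫ eHomWhiskerRight V e X₂ =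
      eHomEquiv V u ≫ eHomWhiskerLeft V A₁ m := by
    rw [← eHomEquiv_comp_right', ← eHomEquiv_comp_left', ← huv]
  refine ⟨(eHomEquiv V).symm (hv.lift (eHomEquiv V v) (eHomEquiv V u) w), ⟨?_, ?_⟩, ?_⟩
  · apply (eHomEquiv V).injective
    rw [eHomEquiv_comp_right', Equiv.apply_symm_apply, hv.lift_snd]
  · apply (eHomEquiv V).injective
    rw [eHomEquiv_comp_left', Equiv.apply_symm_apply, hv.lift_fst]
  · intro d ⟨hd1, hd2⟩
    apply (eHomEquiv V).injective
    rw [Equiv.apply_symm_apply]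
    apply hv.hom_ext
    · rw [hv.lift_fst, ← eHomEquiv_comp_left', hd2]
    · rw [hv.lift_snd, ← eHomEquiv_comp_right', hd1]

/-- An ordinary prefactorization system `(E, M)` on a `V`-category `B` is a
`V`-prefactorization system as soon as each `e ∈ E` is `V`-orthogonal to each `m ∈ M`. -/
theorem stmt2 (E M : MorphismProperty B) (h : IsOrdPrefactorization B E M)
    (horth : ∀ ⦃A₁ A₂ X₁ X₂ : B⦄ (e : A₁ ⟶ A₂) (m : X₁ ⟶ X₂),
      E e → M m → VOrth V B e m) :
    IsVPrefactorization V B E M := by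
  constructor
  · funext X Y m
    apply propext
    constructor
    · intro hm
      rw [← h.1]
      intro A₁ A₂ e he
      exact vOrth_to_ordOrth V B (hm e he)
    · intro hm A₁ A₂ e he
      exact horth e m he hm
  · funext X Y e
    apply propext
    constructor
    · intro he
      rw [← h.2]
      intro X₁ X₂ m hm
      exact vOrth_to_ordOrth V B (he m hm)
    · intro he X₁ X₂ m hm
      exact horth e m he hm

end EnrichedFS
end

section
/- A pair (E,M) of classes of morphisms in a V-category B is a V-factorization system on B if and only if (E,M) is an ordinary factorization system on the underlying ordinary category of B and each e ∈ E is V-orthogonal to each m ∈ M. -/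
open CategoryTheory CategoryTheory.Limits CategoryTheory.MonoidalCategory

universe w v₁ v₂ v₃ v₄ u₁ u₂ u₃ u₄

namespace EnrichedFS

variable (V : Type u₁) [Category.{v₁} V] [MonoidalCategory V] [SymmetricCategory V]
  [MonoidalClosed V]
variable (B : Type u₂) [Category.{v₂} B] [EnrichedOrdinaryCategory V B]

lemma isIso_eHomWhiskerLeft' (A : B) {X Y : B} (i : X ⟶ Y) [IsIso i] :
    IsIso (eHomWhiskerLeft V A i) :=
  ⟨eHomWhiskerLeft V A (inv i),
    by rw [← eHomWhiskerLeft_comp, IsIso.hom_inv_id, eHomWhiskerLeft_id],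
    by rw [← eHomWhiskerLeft_comp, IsIso.inv_hom_id, eHomWhiskerLeft_id]⟩

lemma isIso_eHomWhiskerRight' {X Y : B} (i : X ⟶ Y) [IsIso i] (A : B) :
    IsIso (eHomWhiskerRight V i A) :=
  ⟨eHomWhiskerRight V (inv i) A,
    by rw [← eHomWhiskerRight_comp, IsIso.inv_hom_id, eHomWhiskerRight_id],
    by rw [← eHomWhiskerRight_comp, IsIso.hom_inv_id, eHomWhiskerRight_id]⟩

/-- `V`-orthogonality implies ordinary orthogonality. -/
lemma vOrth_ordOrth {A₁ A₂ X₁ X₂ : B} {e : A₁ ⟶ A₂} {m : X₁ ⟶ X₂}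
    (h : VOrth V B e m) : OrdOrth B e m := by
  intro u v huv
  have hcomm : eHomEquiv V v ≫ eHomWhiskerRight V e X₂ =
      eHomEquiv V u ≫ eHomWhiskerLeft V A₁ m := by
    rw [← eHomEquiv_comp_right', ← eHomEquiv_comp_left', huv]
  refine ⟨(eHomEquiv V).symm (h.lift (eHomEquiv V v) (eHomEquiv V u) hcomm), ⟨?_, ?_⟩, ?_⟩
  · apply (eHomEquiv V).injective
    rw [eHomEquiv_comp_right', Equiv.apply_symm_apply, h.lift_snd]
  · apply (eHomEquiv V).injective
    rw [eHomEquiv_comp_left', Equiv.apply_symm_apply, h.lift_fst]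
  · rintro d ⟨hd1, hd2⟩
    rw [Equiv.eq_symm_apply]
    apply h.hom_ext
    · rw [h.lift_fst, ← eHomEquiv_comp_left', hd2]
    · rw [h.lift_snd, ← eHomEquiv_comp_right', hd1]

/-- `V`-orthogonality is stable under precomposing `m` with an isomorphism. -/
lemma vOrth_isoPre {A₁ A₂ X₀ X₁ X₂ : B} {e : A₁ ⟶ A₂} (i : X₀ ⟶ X₁) (m : X₁ ⟶ X₂) [IsIso i]
    (h : VOrth V B e m) : VOrth V B e (i ≫ m) := by
  haveI := isIso_eHomWhiskerLeft' V B A₂ i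
  haveI := isIso_eHomWhiskerLeft' V B A₁ i
  have sq : IsPullback (eHomWhiskerLeft V A₂ i) (eHomWhiskerRight V e X₀)
      (eHomWhiskerRight V e X₁) (eHomWhiskerLeft V A₁ i) :=
    IsPullback.of_horiz_isIso ⟨eHom_whisker_exchange V e i⟩
  have := sq.paste_horiz h
  rw [← eHomWhiskerLeft_comp, ← eHomWhiskerLeft_comp] at this
  exact this

/-- `V`-orthogonality is stable under postcomposing `e` with an isomorphism. -/
lemma vOrth_isoPost {A₁ A₂ A₃ X₁ X₂ : B} (e : A₁ ⟶ A₂) (i : A₂ ⟶ A₃) [IsIso i] {m : X₁ ⟶ X₂}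
    (h : VOrth V B e m) : VOrth V B (e ≫ i) m := by
  haveI := isIso_eHomWhiskerRight' V B i X₁
  haveI := isIso_eHomWhiskerRight' V B i X₂
  have sq : IsPullback (eHomWhiskerLeft V A₃ m) (eHomWhiskerRight V i X₁)
      (eHomWhiskerRight V i X₂) (eHomWhiskerLeft V A₂ m) :=
    IsPullback.of_vert_isIso ⟨eHom_whisker_exchange V i m⟩
  have := sq.paste_vert h
  rw [← eHomWhiskerRight_comp, ← eHomWhiskerRight_comp] at this
  exact this

/-- `(E,M)` is a `V`-factorization system iff it is an ordinary factorization system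
and each `e ∈ E` is `V`-orthogonal to each `m ∈ M`. -/
theorem stmt4 (E M : MorphismProperty B) :
    IsVFactorizationSystem V B E M ↔
      (IsOrdFactorizationSystem B E M ∧
        ∀ ⦃A₁ A₂ X₁ X₂ : B⦄ (e : A₁ ⟶ A₂) (m : X₁ ⟶ X₂), E e → M m → VOrth V B e m) := by
  constructor
  · rintro ⟨⟨hrlp, hllp⟩, hfact⟩
    have hpair : ∀ ⦃A₁ A₂ X₁ X₂ : B⦄ (e : A₁ ⟶ A₂) (m : X₁ ⟶ X₂),
        E e → M m → VOrth V B e m := by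
      intro _ _ _ _ e m he hm
      rw [← hrlp] at hm
      exact hm e he
    have hpairOrd : ∀ ⦃A₁ A₂ X₁ X₂ : B⦄ (e : A₁ ⟶ A₂) (m : X₁ ⟶ X₂),
        E e → M m → OrdOrth B e m := fun _ _ _ _ e m he hm =>
      vOrth_ordOrth V B (hpair e m he hm)
    refine ⟨⟨⟨?_, ?_⟩, hfact⟩, hpair⟩
    · -- ordRlp B E = M
      ext X Y f
      constructor
      · intro hf
        obtain ⟨Z, e', m', he', hm', hc⟩ := hfact f
        obtain ⟨d, ⟨hd1, hd2⟩, -⟩ := hf e' he' (𝟙 X) m' (by rw [Category.id_comp, hc])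
        -- show e' is an isomorphism
        obtain ⟨d', -, huniq⟩ := hpairOrd e' m' he' hm' e' m' rfl
        have h1 : d ≫ e' = 𝟙 Z := by
          rw [huniq (d ≫ e') ⟨by rw [← Category.assoc, hd1, Category.id_comp],
            by rw [Category.assoc, hc, hd2]⟩,
            huniq (𝟙 Z) ⟨Category.comp_id _, Category.id_comp _⟩]
        haveI : IsIso e' := ⟨d, hd1, h1⟩
        subst hc
        rw [← hrlp]
        intro _ _ e'' he''
        exact vOrth_isoPre V B e' m' (hpair e'' m' he'' hm')
      · intro hm _ _ e he
        exact vOrth_ordOrth V B (hpair e f he hm)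
    · -- ordLlp B M = E
      ext X Y f
      constructor
      · intro hf
        obtain ⟨Z, e', m', he', hm', hc⟩ := hfact f
        obtain ⟨d, ⟨hd1, hd2⟩, -⟩ := hf m' hm' e' (𝟙 Y) (by rw [Category.comp_id, hc])
        obtain ⟨d', -, huniq⟩ := hpairOrd e' m' he' hm' e' m' rfl
        have h1 : m' ≫ d = 𝟙 Z := by
          rw [huniq (m' ≫ d) ⟨by rw [← Category.assoc, hc, hd1],
            by rw [Category.assoc, hd2, Category.comp_id]⟩,
            huniq (𝟙 Z) ⟨Category.comp_id _, Category.id_comp _⟩]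
        haveI : IsIso m' := ⟨d, h1, hd2⟩
        subst hc
        rw [← hllp]
        intro _ _ m'' hm''
        exact vOrth_isoPost V B e' m' (hpair e' m'' he' hm'')
      · intro he _ _ m hm
        exact vOrth_ordOrth V B (hpair f m he hm)
  · rintro ⟨⟨⟨hrlp, hllp⟩, hfact⟩, hpair⟩
    refine ⟨⟨?_, ?_⟩, hfact⟩
    · ext X Y f
      constructor
      · intro hf
        rw [← hrlp]
        intro _ _ e he
        exact vOrth_ordOrth V B (hf e he)
      · intro hm _ _ e he
        exact hpair e f he hm
    · ext X Y f
      constructor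
      · intro hf
        rw [← hllp]
        intro _ _ m hm
        exact vOrth_ordOrth V B (hf m hm)
      · intro he _ _ m hm
        exact hpair f m he hm

end EnrichedFS
end
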